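/- Let X be a pseudocompact Tychonoff space and (Y,d) a hemicompact metric space. Then C(X,Y) with the topology of pointwise convergence is homeomorphic to a subspace of a σ-compact space (namely ⋃_n K_n^X for a cofinal sequence of compacts K_n), and hence (C(X,Y), U_p) is σ-totally bounded and strictly Hurewicz bounded. -/

import Mathlib

open Filter Set

/-- A uniform space is ω-bounded if every entourage admits a countable set of
centers whose balls cover the space. -/
def OmegaBounded (Z : Type*) [UniformSpace Z] : Prop :=
  ∀ U ∈ uniformity Z, ∃ A : Set Z, A.Countable ∧ ∀ z : Z, ∃ a ∈ A, (a, z) ∈ U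

/-- Menger boundedness of a uniform space. -/
def MengerBounded (Z : Type*) [UniformSpace Z] : Prop :=
  ∀ U : ℕ → Set (Z × Z), (∀ n, U n ∈ uniformity Z) →
    ∃ F : ℕ → Finset Z, ∀ z : Z, ∃ n : ℕ, ∃ a ∈ F n, (a, z) ∈ U n

/-- Hurewicz boundedness of a uniform space. -/
def HurewiczBounded (Z : Type*) [UniformSpace Z] : Prop :=
  ∀ U : ℕ → Set (Z × Z), (∀ n, U n ∈ uniformity Z) →
    ∃ F : ℕ → Finset Z, ∀ z : Z, ∀ᶠ n in Filter.atTop, ∃ a ∈ F n, (a, z) ∈ U n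

/-- Rothberger boundedness of a uniform space. -/
def RothbergerBounded (Z : Type*) [UniformSpace Z] : Prop :=
  ∀ U : ℕ → Set (Z × Z), (∀ n, U n ∈ uniformity Z) →
    ∃ x : ℕ → Z, ∀ z : Z, ∃ n : ℕ, (x n, z) ∈ U n

/-- σ-total boundedness: the space is a countable union of totally bounded subsets. -/
def SigmaTotallyBounded (Z : Type*) [UniformSpace Z] : Prop :=
  ∃ S : ℕ → Set Z, (∀ n, TotallyBounded (S n)) ∧ (⋃ n, S n) = Set.univ

/-- The uniformity has a countable base. -/
def HasCountableUniformBase (Z : Type*) [UniformSpace Z] : Prop :=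
  ∃ B : ℕ → Set (Z × Z), (∀ n, B n ∈ uniformity Z) ∧
    ∀ U ∈ uniformity Z, ∃ n, B n ⊆ U

/-- A strategy for player TWO in the Menger boundedness game: given the entourages
played by ONE in the first `n+1` rounds, TWO answers with a finite set. -/
def MengerStrategy (Z : Type*) : Type _ :=
  ∀ n : ℕ, (Fin (n + 1) → Set (Z × Z)) → Finset Z

/-- The strategy `σ` is winning for TWO in the Menger boundedness game. -/
def MengerWinning {Z : Type*} [UniformSpace Z] (σ : MengerStrategy Z) : Prop :=
  ∀ U : ℕ → Set (Z × Z), (∀ n, U n ∈ uniformity Z) →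
    ∀ z : Z, ∃ n : ℕ, ∃ a ∈ σ n (fun i => U i), (a, z) ∈ U n

/-- A strategy for player TWO in the Hurewicz boundedness game. -/
def HurewiczStrategy (Z : Type*) : Type _ :=
  ∀ n : ℕ, (Fin (n + 1) → Set (Z × Z)) → Finset Z

/-- The strategy `σ` is winning for TWO in the Hurewicz boundedness game. -/
def HurewiczWinning {Z : Type*} [UniformSpace Z] (σ : HurewiczStrategy Z) : Prop :=
  ∀ U : ℕ → Set (Z × Z), (∀ n, U n ∈ uniformity Z) →
    ∀ z : Z, ∀ᶠ n in Filter.atTop, ∃ a ∈ σ n (fun i => U i), (a, z) ∈ U n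

/-- A strategy for player TWO in the Rothberger boundedness game: TWO answers with a point. -/
def RothbergerStrategy (Z : Type*) : Type _ :=
  ∀ n : ℕ, (Fin (n + 1) → Set (Z × Z)) → Z

/-- The strategy `σ` is winning for TWO in the Rothberger boundedness game. -/
def RothbergerWinning {Z : Type*} [UniformSpace Z] (σ : RothbergerStrategy Z) : Prop :=
  ∀ U : ℕ → Set (Z × Z), (∀ n, U n ∈ uniformity Z) →
    ∀ z : Z, ∃ n : ℕ, (σ n (fun i => U i), z) ∈ U n

open scoped UniformConvergence

/-- The uniformity of pointwise convergence on `C(X, Y)`. -/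
noncomputable def pointwiseUniformity (X Y : Type*) [TopologicalSpace X] [MetricSpace Y] :
    UniformSpace C(X, Y) :=
  UniformSpace.comap (fun f : C(X, Y) => (f : X → Y)) (Pi.uniformSpace fun _ => Y)

/-- A topological space is pseudocompact if every continuous real-valued function on it
is bounded. -/
def Pseudocompact (X : Type*) [TopologicalSpace X] : Prop :=
  ∀ f : C(X, ℝ), ∃ C : ℝ, ∀ x : X, |f x| ≤ C

/-- A topological space is hemicompact if it has a sequence of compact sets cofinal
in all compact sets. -/
def Hemicompact (Y : Type*) [TopologicalSpace Y] : Prop :=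
  ∃ K : ℕ → Set Y, (∀ n, IsCompact (K n)) ∧ ∀ S : Set Y, IsCompact S → ∃ n, S ⊆ K n

universe u v


section Aux

/-- A metric space on which every continuous real-valued function is bounded is compact. -/
theorem aux_compactSpace_of_pseudo {Z : Type*} [MetricSpace Z]
    (h : ∀ g : C(Z, ℝ), ∃ C : ℝ, ∀ z, |g z| ≤ C) : CompactSpace Z := by
  rw [compactSpace_iff_seqCompactSpace]
  refine ⟨fun u _ => ?_⟩
  by_contra hcon
  have hcl : ∀ a : Z, ¬ MapClusterPt a atTop u := by
    intro a ha
    obtain ⟨ψ, hψ, hten⟩ := TopologicalSpace.FirstCountableTopology.tendsto_subseq ha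
    exact hcon ⟨a, mem_univ a, ψ, hψ, hten⟩
  have key : ∀ a : Z, ∃ ε > 0, ∃ N : ℕ, ∀ n, N ≤ n → ε ≤ dist (u n) a := by
    intro a
    have ha := hcl a
    rw [mapClusterPt_iff_frequently] at ha
    push_neg at ha
    obtain ⟨s, hs, hfr⟩ := ha
    obtain ⟨ε, εpos, hball⟩ := Metric.mem_nhds_iff.1 hs
    obtain ⟨N, hN⟩ := Filter.eventually_atTop.1 hfr
    refine ⟨ε, εpos, N, fun n hn => ?_⟩
    by_contra hlt
    exact hN n hn (hball (by simpa [Metric.mem_ball] using not_le.1 hlt))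
  -- the range of `u` is infinite
  have hinf : (Set.range u).Infinite := by
    intro hfin
    haveI : Finite ↥(Set.range u) := hfin.to_subtype
    obtain ⟨y, hy⟩ := Finite.exists_infinite_fiber
      (fun n : ℕ => (⟨u n, Set.mem_range_self n⟩ : ↥(Set.range u)))
    have hfib : ((fun n : ℕ => (⟨u n, Set.mem_range_self n⟩ : ↥(Set.range u))) ⁻¹'
        {y}).Infinite := Set.infinite_coe_iff.1 hy
    obtain ⟨ε, εpos, N, hN⟩ := key y.val
    obtain ⟨n, hn, hNn⟩ := hfib.exists_gt N
    have hun : u n = y.val :=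
      congrArg Subtype.val (Set.mem_singleton_iff.1 (Set.mem_preimage.1 hn))
    have := hN n hNn.le
    rw [hun, dist_self] at this
    exact absurd this (not_le.2 εpos)
  -- the range of `u` is closed
  have hScl : IsClosed (Set.range u) := by
    rw [← closure_subset_iff_isClosed]
    intro x hx
    by_contra hxS
    obtain ⟨ε, εpos, N, hN⟩ := key x
    set F : Finset ℝ := insert ε ((Finset.range N).image fun n => dist x (u n)) with hF
    have hFne : F.Nonempty := ⟨ε, Finset.mem_insert_self _ _⟩
    have hδpos : 0 < F.min' hFne := by
      rw [Finset.lt_min'_iff]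
      intro y hy
      rcases Finset.mem_insert.1 hy with rfl | hy
      · exact εpos
      · obtain ⟨n, -, rfl⟩ := Finset.mem_image.1 hy
        exact dist_pos.2 fun he => hxS ⟨n, he.symm⟩
    obtain ⟨y, ⟨n, rfl⟩, hylt⟩ := Metric.mem_closure_iff.1 hx _ hδpos
    rcases lt_or_ge n N with hn | hn
    · exact absurd hylt (not_lt.2 (Finset.min'_le _ _
        (Finset.mem_insert_of_mem (Finset.mem_image_of_mem _ (Finset.mem_range.2 hn)))))
    · refine absurd hylt (not_lt.2 (le_trans (Finset.min'_le _ _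
        (Finset.mem_insert_self _ _)) ?_))
      rw [dist_comm]
      exact hN n hn
  -- the range of `u` is discrete
  haveI hdisc : DiscreteTopology ↥(Set.range u) := by
    rw [discreteTopology_iff_isOpen_singleton]
    intro z
    obtain ⟨ε, εpos, N, hN⟩ := key z.val
    classical
    set F : Finset ℝ := insert ε (((Finset.range N).filter fun n => u n ≠ z.val).image
      fun n => dist z.val (u n)) with hF
    have hFne : F.Nonempty := ⟨ε, Finset.mem_insert_self _ _⟩
    have hδpos : 0 < F.min' hFne := by
      rw [Finset.lt_min'_iff]
      intro y hy
      rcases Finset.mem_insert.1 hy with rfl | hy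
      · exact εpos
      · obtain ⟨n, hn, rfl⟩ := Finset.mem_image.1 hy
        exact dist_pos.2 fun he => (Finset.mem_filter.1 hn).2 he.symm
    have hset : {z} = (Subtype.val : ↥(Set.range u) → Z) ⁻¹' Metric.ball z.val (F.min' hFne) := by
      ext w
      simp only [Set.mem_singleton_iff, Set.mem_preimage, Metric.mem_ball]
      constructor
      · rintro rfl
        rw [dist_self]; exact hδpos
      · intro hw
        obtain ⟨n, hn⟩ := w.2
        rcases lt_or_ge n N with hnN | hnN
        · by_cases hne : u n = z.val
          · exact Subtype.ext (by rw [← hn, hne])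
          · exfalso
            have hmem : dist z.val (u n) ∈ F := Finset.mem_insert_of_mem
              (Finset.mem_image_of_mem _ (Finset.mem_filter.2 ⟨Finset.mem_range.2 hnN, hne⟩))
            have h2 : F.min' hFne ≤ dist (w : Z) (z : Z) := by
              calc F.min' hFne ≤ dist (z : Z) (u n) := Finset.min'_le _ _ hmem
                _ = dist (w : Z) (z : Z) := by rw [hn, dist_comm]
            exact absurd (lt_of_lt_of_le hw h2) (lt_irrefl _)
        · exfalso
          have h2 : ε ≤ dist (w : Z) (z : Z) := by
            rw [← hn]
            exact hN n hnN
          exact absurd (lt_of_lt_of_le hw (le_trans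
            (Finset.min'_le _ _ (Finset.mem_insert_self _ _)) h2)) (lt_irrefl _)
    rw [hset]
    exact Metric.isOpen_ball.preimage continuous_subtype_val
  -- build an unbounded continuous function
  haveI : Infinite ↥(Set.range u) := hinf.to_subtype
  let ν : ↥(Set.range u) → ℕ := fun z => z.2.choose
  have hν : ∀ z, u (ν z) = z.val := fun z => z.2.choose_spec
  have hνinj : Function.Injective ν := fun a b hab =>
    Subtype.ext (by rw [← hν a, ← hν b, hab])
  obtain ⟨g, hg⟩ := ContinuousMap.exists_restrict_eq hScl
    (ContinuousMap.mk (fun z => (ν z : ℝ)) continuous_of_discreteTopology)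
  obtain ⟨C, hC⟩ := h g
  have hνinf : (Set.range ν).Infinite := Set.infinite_range_of_injective hνinj
  obtain ⟨m, ⟨z, rfl⟩, hm⟩ := hνinf.exists_gt ⌈C⌉₊
  have hge : g z.val = (ν z : ℝ) := by
    have := ContinuousMap.ext_iff.1 hg z
    simpa [ContinuousMap.restrict_apply] using this
  have hCz := hC z.val
  rw [hge] at hCz
  have : (ν z : ℝ) ≤ C := le_trans (le_abs_self _) hCz
  have hlt : C < (ν z : ℝ) :=
    lt_of_le_of_lt (Nat.le_ceil C) (by exact_mod_cast hm)
  exact absurd this (not_le.2 hlt)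

/-- For pseudocompact `X`, the range of any continuous map into a metric space is compact. -/
theorem aux_range_isCompact {X : Type u} {Y : Type v} [TopologicalSpace X] [MetricSpace Y]
    (hX : Pseudocompact X) (f : C(X, Y)) : IsCompact (Set.range f) := by
  have : CompactSpace ↥(Set.range f) := by
    apply aux_compactSpace_of_pseudo
    intro g
    let f' : C(X, ↥(Set.range f)) :=
      ⟨Set.codRestrict (⇑f) (Set.range f) fun x => Set.mem_range_self x,
        (map_continuous f).codRestrict fun x => Set.mem_range_self x⟩
    obtain ⟨C, hC⟩ := hX (g.comp f')
    refine ⟨C, fun z => ?_⟩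
    obtain ⟨x, hx⟩ := z.2
    have hz : f' x = z := Subtype.ext hx
    have := hC x
    rwa [ContinuousMap.comp_apply, hz] at this
  exact isCompact_iff_compactSpace.mpr this

/-- Transfer of total boundedness along the pointwise uniformity. -/
theorem aux_totallyBounded_pointwise {X : Type u} {Y : Type v} [TopologicalSpace X]
    [MetricSpace Y] {T : Set C(X, Y)}
    (hTB : TotallyBounded ((fun f : C(X, Y) => (f : X → Y)) '' T)) :
    @TotallyBounded _ (pointwiseUniformity X Y) T := by
  intro d hd
  obtain ⟨V, hV, hVd⟩ := Filter.mem_comap.1 hd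
  obtain ⟨t, hts, htf, hcov⟩ := totallyBounded_iff_subset.1 hTB V hV
  refine ⟨(fun f : C(X, Y) => (f : X → Y)) ⁻¹' t,
    htf.preimage (Set.injOn_of_injective DFunLike.coe_injective), ?_⟩
  intro f hf
  obtain ⟨y, hy, hxy⟩ := Set.mem_iUnion₂.1 (hcov (Set.mem_image_of_mem _ hf))
  obtain ⟨g, -, rfl⟩ := hts hy
  refine Set.mem_iUnion₂.2 ⟨g, hy, ?_⟩
  exact hVd hxy

end Aux

/-- For pseudocompact Tychonoff `X` and hemicompact metric `Y`, the space `C(X,Y)` with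
the topology of pointwise convergence embeds in a σ-compact space, and with the uniformity
of pointwise convergence it is σ-totally bounded and strictly Hurewicz bounded. -/
theorem pointwise_sigmaTotallyBounded_of_pseudocompact
    (X : Type u) (Y : Type v) [TopologicalSpace X] [CompletelyRegularSpace X] [T1Space X]
    [MetricSpace Y] (hX : Pseudocompact X) (hY : Hemicompact Y) :
    (∃ (S : Type (max u v)) (_ : TopologicalSpace S),
        SigmaCompactSpace S ∧
          ∃ e : C(X, Y) → S,
            @Topology.IsEmbedding _ _ (pointwiseUniformity X Y).toTopologicalSpace _ e) ∧
      @SigmaTotallyBounded C(X, Y) (pointwiseUniformity X Y) ∧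
        ∃ σ : HurewiczStrategy C(X, Y),
          @HurewiczWinning C(X, Y) (pointwiseUniformity X Y) σ := by
  classical
  obtain ⟨K, hKc, hKcof⟩ := hY
  -- monotone compact exhaustion
  set K' : ℕ → Set Y := fun n => ⋃ i ∈ Finset.range (n + 1), K i with hK'
  have hK'c : ∀ n, IsCompact (K' n) :=
    fun n => (Finset.range (n + 1)).isCompact_biUnion fun i _ => hKc i
  have hK'mono : ∀ {m n : ℕ}, m ≤ n → K' m ⊆ K' n := by
    intro m n hmn y hy
    obtain ⟨i, hi, hyi⟩ := Set.mem_iUnion₂.1 hy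
    exact Set.mem_iUnion₂.2 ⟨i, Finset.mem_range.2
      (lt_of_lt_of_le (Finset.mem_range.1 hi) (Nat.succ_le_succ hmn)), hyi⟩
  set T : ℕ → Set C(X, Y) := fun n => {f | ∀ x, f x ∈ K' n} with hT
  have hTcof : ∀ f : C(X, Y), ∃ n, f ∈ T n := by
    intro f
    obtain ⟨n, hn⟩ := hKcof (Set.range f) (aux_range_isCompact hX f)
    refine ⟨n, fun x => ?_⟩
    exact Set.mem_iUnion₂.2 ⟨n, Finset.self_mem_range_succ n, hn (Set.mem_range_self x)⟩
  have hTB : ∀ n, @TotallyBounded _ (pointwiseUniformity X Y) (T n) := by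
    intro n
    apply aux_totallyBounded_pointwise
    refine TotallyBounded.subset ?_ (isCompact_univ_pi fun _ : X => hK'c n).totallyBounded
    rintro - ⟨f, hf, rfl⟩
    exact fun x _ => hf x
  refine ⟨?_, ⟨T, hTB, ?_⟩, ?_⟩
  · -- embedding into a σ-compact space
    refine ⟨↥(⋃ n, Set.pi Set.univ fun _ : X => K' n), inferInstance, ⟨?_⟩, ?_⟩
    · -- σ-compactness
      refine ⟨fun n => Subtype.val ⁻¹' (Set.pi Set.univ fun _ : X => K' n), fun n => ?_, ?_⟩
      · rw [Subtype.isCompact_iff]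
        have : (Subtype.val '' (Subtype.val ⁻¹' (Set.pi Set.univ fun _ : X => K' n) :
            Set ↥(⋃ m, Set.pi Set.univ fun _ : X => K' m)))
            = Set.pi Set.univ fun _ : X => K' n := by
          rw [Subtype.image_preimage_val]
          exact Set.inter_eq_self_of_subset_right (Set.subset_iUnion
            (fun m => Set.pi Set.univ fun _ : X => K' m) n)
        rw [this]
        exact isCompact_univ_pi fun _ : X => hK'c n
      · ext z
        simp only [Set.mem_iUnion, Set.mem_preimage, Set.mem_univ, iff_true]
        exact Set.mem_iUnion.1 z.2
    · -- the embedding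
      have hmem : ∀ f : C(X, Y), (f : X → Y) ∈ ⋃ n, Set.pi Set.univ fun _ : X => K' n := by
        intro f
        obtain ⟨n, hn⟩ := hTcof f
        exact Set.mem_iUnion.2 ⟨n, fun x _ => hn x⟩
      have hcoe : @Topology.IsEmbedding C(X, Y) (X → Y)
          (pointwiseUniformity X Y).toTopologicalSpace _ fun f => (f : X → Y) :=
        @Topology.IsEmbedding.mk C(X, Y) (X → Y)
          (pointwiseUniformity X Y).toTopologicalSpace _ _
          (@Topology.IsInducing.mk C(X, Y) (X → Y)
            (pointwiseUniformity X Y).toTopologicalSpace _ _ rfl)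
          fun f g hfg => DFunLike.coe_injective hfg
      exact ⟨Set.codRestrict (fun f : C(X, Y) => (f : X → Y)) _ hmem,
        @Topology.IsEmbedding.codRestrict _ _ (pointwiseUniformity X Y).toTopologicalSpace _
          _ hcoe _ hmem⟩
  · -- union is everything
    ext f
    simp only [Set.mem_iUnion, Set.mem_univ, iff_true]
    exact hTcof f
  · -- Hurewicz strategy
    have hcov : ∀ (n : ℕ) (U : Set (C(X, Y) × C(X, Y))),
        U ∈ @uniformity _ (pointwiseUniformity X Y) →
        ∃ F : Finset C(X, Y), ∀ f ∈ T n, ∃ a ∈ F, (a, f) ∈ U := by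
      intro n U hU
      have hswap : Prod.swap ⁻¹' U ∈ @uniformity _ (pointwiseUniformity X Y) :=
        Filter.mem_map.1 (Filter.le_def.1
          (@tendsto_swap_uniformity C(X, Y) (pointwiseUniformity X Y)) U hU)
      obtain ⟨t, htf, hc⟩ := hTB n _ hswap
      refine ⟨htf.toFinset, fun f hf => ?_⟩
      obtain ⟨y, hy, hxy⟩ := Set.mem_iUnion₂.1 (hc hf)
      exact ⟨y, htf.mem_toFinset.2 hy, hxy⟩
    choose F hF using hcov
    refine ⟨fun n V =>
      if h : V (Fin.last n) ∈ @uniformity _ (pointwiseUniformity X Y)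
      then F n (V (Fin.last n)) h else ∅, ?_⟩
    intro U hU z
    obtain ⟨m, hm⟩ := hTcof z
    rw [Filter.eventually_atTop]
    refine ⟨m, fun n hn => ?_⟩
    have hz : z ∈ T n := fun x => hK'mono hn (hm x)
    show ∃ a ∈ (if h : U n ∈ @uniformity _ (pointwiseUniformity X Y)
      then F n (U n) h else ∅), (a, z) ∈ U n
    rw [dif_pos (hU n)]
    exact hF n (U n) (hU n) z hz
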